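/- Let D = {a, b, c}, 𝓑 = {{[a,b],[a]}, {[b,c],[c]}}, and C₂ = { bᵐ·c·a·bⁿ : m, n ∈ ℕ }. A probability measure P supported in C₂ is 𝓑-Markov on D⁺ if and only if there exist r₁, r₂ ∈ (0,1) such that P(bᵐ·c·a·bⁿ) = r₁r₂(1−r₁)ᵐ(1−r₂)ⁿ for all m, n ∈ ℕ. -/

import Mathlib

def IsMarkovSet {D : Type*} (𝒟 : Set (List D)) (P : List D → ℝ) (B : Set (List D)) : Prop :=
  ∃ β : List D → List D → ℝ,
    (∀ y ∈ B, ∀ y' ∈ B, β y y' = - β y' y) ∧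
    ∀ (x₁ x₂ : List D), ∀ y ∈ B, ∀ y' ∈ B,
      x₁ ++ y ++ x₂ ∈ 𝒟 → x₁ ++ y' ++ x₂ ∈ 𝒟 →
      P (x₁ ++ y' ++ x₂) = P (x₁ ++ y ++ x₂) * Real.exp (β y y')

/-- With `D = {a, b, c}` encoded as `Fin 3` (`a = 0`, `b = 1`, `c = 2`),
the string `bᵐ c a bⁿ`. -/
def wBCAB (m n : ℕ) : List (Fin 3) := List.replicate m 1 ++ [2, 0] ++ List.replicate n 1

/-- The component `C₂ = { bᵐ c a bⁿ : m, n ∈ ℕ }`. -/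
def C2 : Set (List (Fin 3)) := {s | ∃ m n, s = wBCAB m n}

/-- The family `𝓑 = { {ab, a}, {bc, c} }`. -/
def Bfam : Set (Set (List (Fin 3))) := {{[0, 1], [0]}, {[1, 2], [2]}}

/-- The domain `D⁺` of all nonempty strings. -/
def Dplus : Set (List (Fin 3)) := {s | s ≠ []}

lemma wBCAB_zero (n : ℕ) : wBCAB 0 n = 2 :: 0 :: List.replicate n 1 := by simp [wBCAB]

lemma wBCAB_succ (m n : ℕ) : wBCAB (m+1) n = 1 :: wBCAB m n := by
  simp [wBCAB, List.replicate_succ]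

lemma aux_a : ∀ (x₁ : List (Fin 3)) (m : ℕ) (x₂ : List (Fin 3)) (n : ℕ),
    x₁ ++ 0 :: x₂ = wBCAB m n → x₁ = List.replicate m 1 ++ [2] ∧ x₂ = List.replicate n 1 := by
  intro x₁
  induction x₁ with
  | nil =>
    intro m x₂ n h
    cases m with
    | zero => rw [wBCAB_zero] at h; simp at h
    | succ m => rw [wBCAB_succ, wBCAB] at h; simp at h
  | cons d x₁ ih =>
    intro m x₂ n h
    cases m with
    | zero =>
      rw [wBCAB_zero] at h
      simp only [List.cons_append, List.cons.injEq] at h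
      obtain ⟨rfl, h⟩ := h
      cases x₁ with
      | nil =>
        simp only [List.nil_append, List.cons.injEq] at h
        simp [h.2]
      | cons e x₁ =>
        simp only [List.cons_append, List.cons.injEq] at h
        obtain ⟨rfl, h⟩ := h
        exfalso
        have : (0 : Fin 3) ∈ List.replicate n (1 : Fin 3) := by
          rw [← h]; simp
        exact absurd (List.eq_of_mem_replicate this) (by decide)
    | succ m =>
      rw [wBCAB_succ] at h
      simp only [List.cons_append, List.cons.injEq] at h
      obtain ⟨rfl, h⟩ := h
      obtain ⟨h1, h2⟩ := ih m x₂ n h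
      refine ⟨?_, h2⟩
      rw [h1, List.replicate_succ]
      simp

lemma aux_c : ∀ (x₁ : List (Fin 3)) (m : ℕ) (x₂ : List (Fin 3)) (n : ℕ),
    x₁ ++ 2 :: x₂ = wBCAB m n → x₁ = List.replicate m 1 ∧ x₂ = 0 :: List.replicate n 1 := by
  intro x₁
  induction x₁ with
  | nil =>
    intro m x₂ n h
    cases m with
    | zero => rw [wBCAB_zero] at h; simpa using h
    | succ m => rw [wBCAB_succ, wBCAB] at h; simp at h
  | cons d x₁ ih =>
    intro m x₂ n h
    cases m with
    | zero =>
      rw [wBCAB_zero] at h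
      simp only [List.cons_append, List.cons.injEq] at h
      obtain ⟨rfl, h⟩ := h
      exfalso
      have : (2 : Fin 3) ∈ (0 : Fin 3) :: List.replicate n (1 : Fin 3) := by
        rw [← h]; simp
      rcases List.mem_cons.1 this with h' | h'
      · exact absurd h' (by decide)
      · exact absurd (List.eq_of_mem_replicate h') (by decide)
    | succ m =>
      rw [wBCAB_succ] at h
      simp only [List.cons_append, List.cons.injEq] at h
      obtain ⟨rfl, h⟩ := h
      obtain ⟨h1, h2⟩ := ih m x₂ n h
      refine ⟨?_, h2⟩
      rw [h1, List.replicate_succ]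

lemma eq_a (m n : ℕ) :
    (List.replicate m 1 ++ [2]) ++ [0] ++ List.replicate n 1 = wBCAB m n := by
  simp [wBCAB]

lemma eq_ab (m n : ℕ) :
    (List.replicate m 1 ++ [2]) ++ [0, 1] ++ List.replicate n 1 = wBCAB m (n+1) := by
  simp [wBCAB, List.replicate_succ]

lemma eq_c (m n : ℕ) :
    List.replicate m 1 ++ [2] ++ (0 :: List.replicate n 1) = wBCAB m n := by
  simp [wBCAB]

lemma eq_bc (m n : ℕ) :
    List.replicate m 1 ++ [1, 2] ++ (0 :: List.replicate n 1) = wBCAB (m+1) n := by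
  simp [wBCAB, List.replicate_succ']

lemma C2_a (x₁ x₂ : List (Fin 3)) : x₁ ++ [0] ++ x₂ ∈ C2 ↔
    ∃ m n, x₁ = List.replicate m 1 ++ [2] ∧ x₂ = List.replicate n 1 := by
  constructor
  · rintro ⟨m, n, h⟩
    have h' : x₁ ++ 0 :: x₂ = wBCAB m n := by simpa using h
    exact ⟨m, n, aux_a x₁ m x₂ n h'⟩
  · rintro ⟨m, n, rfl, rfl⟩
    exact ⟨m, n, eq_a m n⟩

lemma C2_ab (x₁ x₂ : List (Fin 3)) : x₁ ++ [0, 1] ++ x₂ ∈ C2 ↔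
    ∃ m n, x₁ = List.replicate m 1 ++ [2] ∧ x₂ = List.replicate n 1 := by
  constructor
  · rintro ⟨m, n, h⟩
    have h' : x₁ ++ 0 :: (1 :: x₂) = wBCAB m n := by simpa using h
    obtain ⟨h1, h2⟩ := aux_a x₁ m (1 :: x₂) n h'
    cases n with
    | zero => simp at h2
    | succ n =>
      rw [List.replicate_succ] at h2
      exact ⟨m, n, h1, by simpa using h2⟩
  · rintro ⟨m, n, rfl, rfl⟩
    exact ⟨m, n+1, eq_ab m n⟩

lemma C2_c (x₁ x₂ : List (Fin 3)) : x₁ ++ [2] ++ x₂ ∈ C2 ↔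
    ∃ m n, x₁ = List.replicate m 1 ∧ x₂ = 0 :: List.replicate n 1 := by
  constructor
  · rintro ⟨m, n, h⟩
    have h' : x₁ ++ 2 :: x₂ = wBCAB m n := by simpa using h
    exact ⟨m, n, aux_c x₁ m x₂ n h'⟩
  · rintro ⟨m, n, rfl, rfl⟩
    exact ⟨m, n, eq_c m n⟩

lemma C2_bc (x₁ x₂ : List (Fin 3)) : x₁ ++ [1, 2] ++ x₂ ∈ C2 ↔
    ∃ m n, x₁ = List.replicate m 1 ∧ x₂ = 0 :: List.replicate n 1 := by
  constructor
  · rintro ⟨m, n, h⟩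
    have h' : (x₁ ++ [1]) ++ 2 :: x₂ = wBCAB m n := by simpa using h
    obtain ⟨h1, h2⟩ := aux_c (x₁ ++ [1]) m x₂ n h'
    cases m with
    | zero => simp at h1
    | succ m =>
      rw [List.replicate_succ'] at h1
      exact ⟨m, n, by simpa using h1, h2⟩
  · rintro ⟨m, n, rfl, rfl⟩
    exact ⟨m+1, n, eq_bc m n⟩

lemma wBCAB_inj : Function.Injective (fun p : ℕ × ℕ => wBCAB p.1 p.2) := by
  rintro ⟨m, n⟩ ⟨m', n'⟩ h
  simp only at h
  have h' : List.replicate m 1 ++ 2 :: (0 :: List.replicate n 1) = wBCAB m' n' := by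
    rw [← h, wBCAB]; simp
  obtain ⟨h1, h2⟩ := aux_c _ m' _ n' h'
  have hm : m = m' := by
    have := congrArg List.length h1; simpa using this
  have hn : n = n' := by
    have := congrArg List.length h2; simpa using this
  simp [hm, hn]

lemma key_ab {P : List (Fin 3) → ℝ} {r₁ r₂ : ℝ}
    (hPsupp : ∀ s, P s ≠ 0 → s ∈ C2)
    (hF : ∀ m n : ℕ, P (wBCAB m n) = r₁ * r₂ * (1 - r₁) ^ m * (1 - r₂) ^ n)
    (x₁ x₂ : List (Fin 3)) :
    P (x₁ ++ [0, 1] ++ x₂) = P (x₁ ++ [0] ++ x₂) * (1 - r₂) := by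
  by_cases h : x₁ ++ [0] ++ x₂ ∈ C2
  · obtain ⟨m, n, rfl, rfl⟩ := (C2_a _ _).1 h
    rw [eq_ab, eq_a, hF, hF]; ring
  · have h0 : P (x₁ ++ [0] ++ x₂) = 0 := by
      by_contra hne; exact h (hPsupp _ hne)
    have h0' : P (x₁ ++ [0, 1] ++ x₂) = 0 := by
      by_contra hne
      exact h ((C2_a _ _).2 ((C2_ab _ _).1 (hPsupp _ hne)))
    rw [h0, h0']; ring

lemma key_bc {P : List (Fin 3) → ℝ} {r₁ r₂ : ℝ}
    (hPsupp : ∀ s, P s ≠ 0 → s ∈ C2)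
    (hF : ∀ m n : ℕ, P (wBCAB m n) = r₁ * r₂ * (1 - r₁) ^ m * (1 - r₂) ^ n)
    (x₁ x₂ : List (Fin 3)) :
    P (x₁ ++ [1, 2] ++ x₂) = P (x₁ ++ [2] ++ x₂) * (1 - r₁) := by
  by_cases h : x₁ ++ [2] ++ x₂ ∈ C2
  · obtain ⟨m, n, rfl, rfl⟩ := (C2_c _ _).1 h
    rw [eq_bc, eq_c, hF, hF]; ring
  · have h0 : P (x₁ ++ [2] ++ x₂) = 0 := by
      by_contra hne; exact h (hPsupp _ hne)
    have h0' : P (x₁ ++ [1, 2] ++ x₂) = 0 := by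
      by_contra hne
      exact h ((C2_c _ _).2 ((C2_bc _ _).1 (hPsupp _ hne)))
    rw [h0, h0']; ring

set_option maxHeartbeats 1000000 in
theorem stmt16 (P : List (Fin 3) → ℝ) (hP0 : ∀ s, 0 ≤ P s)
    (hP1 : (∑' s : List (Fin 3), P s) = 1) (hPsupp : ∀ s, P s ≠ 0 → s ∈ C2) :
    (∀ B ∈ Bfam, IsMarkovSet Dplus P B) ↔
      ∃ r₁ ∈ Set.Ioo (0 : ℝ) 1, ∃ r₂ ∈ Set.Ioo (0 : ℝ) 1,
        ∀ m n : ℕ, P (wBCAB m n) = r₁ * r₂ * (1 - r₁) ^ m * (1 - r₂) ^ n := by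
  constructor
  · intro hM
    obtain ⟨β₁, -, hβ₁⟩ := hM {[0, 1], [0]} (by left; rfl)
    obtain ⟨β₂, -, hβ₂⟩ := hM {[1, 2], [2]} (by right; rfl)
    set t := Real.exp (β₁ [0] [0, 1]) with htdef
    set s := Real.exp (β₂ [2] [1, 2]) with hsdef
    have ht0 : 0 < t := Real.exp_pos _
    have hs0 : 0 < s := Real.exp_pos _
    have hrect : ∀ m n, P (wBCAB m (n + 1)) = P (wBCAB m n) * t := by
      intro m n
      have h := hβ₁ (List.replicate m 1 ++ [2]) (List.replicate n 1) [0]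
        (by right; rfl) [0, 1] (by left; rfl) (by simp [Dplus]) (by simp [Dplus])
      rw [eq_a, eq_ab] at h
      exact h
    have hrecs : ∀ m n, P (wBCAB (m + 1) n) = P (wBCAB m n) * s := by
      intro m n
      have h := hβ₂ (List.replicate m 1) (0 :: List.replicate n 1) [2]
        (by right; rfl) [1, 2] (by left; rfl) (by simp [Dplus]) (by simp [Dplus])
      rw [eq_c, eq_bc] at h
      exact h
    set P0 := P (wBCAB 0 0) with hP0def
    have hform : ∀ m n, P (wBCAB m n) = P0 * s ^ m * t ^ n := by
      have hcol : ∀ m, P (wBCAB m 0) = P0 * s ^ m := by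
        intro m; induction m with
        | zero => simp [hP0def]
        | succ m ih => rw [hrecs, ih]; ring
      intro m n; induction n with
      | zero => simpa using hcol m
      | succ n ih => rw [hrect, ih]; ring
    have hsum : Summable P := by
      by_contra h
      rw [tsum_eq_zero_of_not_summable h] at hP1
      exact one_ne_zero hP1.symm
    have hsupp : Function.support P ⊆ Set.range (fun p : ℕ × ℕ => wBCAB p.1 p.2) := by
      intro x hx
      obtain ⟨m, n, rfl⟩ := hPsupp x hx
      exact ⟨(m, n), rfl⟩
    have htsum : ∑' p : ℕ × ℕ, P (wBCAB p.1 p.2) = 1 :=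
      (wBCAB_inj.tsum_eq hsupp).trans hP1
    have hsum2 : Summable (fun p : ℕ × ℕ => P (wBCAB p.1 p.2)) :=
      hsum.comp_injective wBCAB_inj
    have hP0pos : 0 < P0 := by
      rcases (hP0 (wBCAB 0 0)).lt_or_eq with h | h
      · exact h
      · exfalso
        have hz : ∀ p : ℕ × ℕ, P (wBCAB p.1 p.2) = 0 := by
          intro p; rw [hform p.1 p.2, hP0def, ← h]; ring
        rw [tsum_congr hz, tsum_zero] at htsum
        exact one_ne_zero htsum.symm
    have hslt : s < 1 := by
      have h1 : Summable (fun m : ℕ => P (wBCAB m 0)) :=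
        hsum2.comp_injective (i := fun m : ℕ => ((m, 0) : ℕ × ℕ))
          (fun _ _ hab => (Prod.ext_iff.1 hab).1)
      have h2 : Summable (fun m : ℕ => P0 * s ^ m) :=
        h1.congr (fun m => by rw [hform]; try ring)
      have h3 : Summable (fun m : ℕ => s ^ m) :=
        (summable_mul_left_iff hP0pos.ne').1 h2
      have := summable_geometric_iff_norm_lt_one.1 h3
      rwa [Real.norm_eq_abs, abs_of_pos hs0] at this
    have htlt : t < 1 := by
      have h1 : Summable (fun n : ℕ => P (wBCAB 0 n)) :=
        hsum2.comp_injective (i := fun n : ℕ => ((0, n) : ℕ × ℕ))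
          (fun _ _ hab => (Prod.ext_iff.1 hab).2)
      have h2 : Summable (fun n : ℕ => P0 * t ^ n) :=
        h1.congr (fun n => by rw [hform]; try ring)
      have h3 : Summable (fun n : ℕ => t ^ n) :=
        (summable_mul_left_iff hP0pos.ne').1 h2
      have := summable_geometric_iff_norm_lt_one.1 h3
      rwa [Real.norm_eq_abs, abs_of_pos ht0] at this
    have hcalc : ∑' p : ℕ × ℕ, P (wBCAB p.1 p.2) = P0 * (1 - s)⁻¹ * (1 - t)⁻¹ := by
      rw [Summable.tsum_prod' hsum2 (fun m => hsum2.prod_factor m)]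
      have hrow : ∀ m : ℕ, ∑' n : ℕ, P (wBCAB m n) = P0 * s ^ m * (1 - t)⁻¹ := by
        intro m
        calc ∑' n : ℕ, P (wBCAB m n) = ∑' n : ℕ, (P0 * s ^ m) * t ^ n :=
              tsum_congr fun n => by rw [hform]; try ring
          _ = (P0 * s ^ m) * ∑' n : ℕ, t ^ n := tsum_mul_left
          _ = P0 * s ^ m * (1 - t)⁻¹ := by
              rw [tsum_geometric_of_lt_one ht0.le htlt]
      rw [tsum_congr hrow]
      calc ∑' m : ℕ, P0 * s ^ m * (1 - t)⁻¹
          = ∑' m : ℕ, (P0 * (1 - t)⁻¹) * s ^ m := tsum_congr fun m => by ring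
        _ = (P0 * (1 - t)⁻¹) * ∑' m : ℕ, s ^ m := tsum_mul_left
        _ = P0 * (1 - s)⁻¹ * (1 - t)⁻¹ := by
            rw [tsum_geometric_of_lt_one hs0.le hslt]; ring
    have hkey : P0 * (1 - s)⁻¹ * (1 - t)⁻¹ = 1 := by rw [← hcalc]; exact htsum
    have hs1 : (0 : ℝ) < 1 - s := by linarith
    have ht1 : (0 : ℝ) < 1 - t := by linarith
    have hP0eq : P0 = (1 - s) * (1 - t) := by
      have h3 : P0 * (1 - s)⁻¹ * (1 - t)⁻¹ * ((1 - s) * (1 - t)) = 1 * ((1 - s) * (1 - t)) := by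
        rw [hkey]
      rw [one_mul] at h3
      rw [← h3]
      field_simp
    refine ⟨1 - s, ⟨by linarith, by linarith⟩, 1 - t, ⟨by linarith, by linarith⟩, ?_⟩
    intro m n
    rw [hform m n, hP0eq]
    ring
  · rintro ⟨r₁, hr₁, r₂, hr₂, hF⟩
    have h1 : (0 : ℝ) < 1 - r₁ := by linarith [hr₁.2]
    have h2 : (0 : ℝ) < 1 - r₂ := by linarith [hr₂.2]
    intro B hB
    simp only [Bfam, Set.mem_insert_iff, Set.mem_singleton_iff] at hB
    rcases hB with rfl | rfl
    · refine ⟨fun y y' => (if y' = [0, 1] then Real.log (1 - r₂) else 0) -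
        (if y = [0, 1] then Real.log (1 - r₂) else 0), fun y _ y' _ => by ring, ?_⟩
      intro x₁ x₂ y hy y' hy' _ _
      simp only [Set.mem_insert_iff, Set.mem_singleton_iff] at hy hy'
      rcases hy with rfl | rfl <;> rcases hy' with rfl | rfl
      · simp
      · beta_reduce
        rw [if_neg (by decide), if_pos rfl, zero_sub, Real.exp_neg, Real.exp_log h2,
          key_ab hPsupp hF x₁ x₂]
        field_simp
      · beta_reduce
        rw [if_pos rfl, if_neg (by decide), sub_zero, Real.exp_log h2]
        exact key_ab hPsupp hF x₁ x₂
      · simp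
    · refine ⟨fun y y' => (if y' = [1, 2] then Real.log (1 - r₁) else 0) -
        (if y = [1, 2] then Real.log (1 - r₁) else 0), fun y _ y' _ => by ring, ?_⟩
      intro x₁ x₂ y hy y' hy' _ _
      simp only [Set.mem_insert_iff, Set.mem_singleton_iff] at hy hy'
      rcases hy with rfl | rfl <;> rcases hy' with rfl | rfl
      · simp
      · beta_reduce
        rw [if_neg (by decide), if_pos rfl, zero_sub, Real.exp_neg, Real.exp_log h1,
          key_bc hPsupp hF x₁ x₂]
        field_simp
      · beta_reduce
        rw [if_pos rfl, if_neg (by decide), sub_zero, Real.exp_log h1]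
        exact key_bc hPsupp hF x₁ x₂
      · simp
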